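/- Let H be a real Hilbert space, m ≥ 1 an integer, and for each l ∈ {1,…,m} let 0 ≤ σ_l < β_l ≤ +∞. Let {(𝐲_i, 𝐅_i, 𝐮_i)}_{i∈I} be a finite family of triplets in H^m × ℝ^m × H^m. Then the following are equivalent: (i) there exist functions f_1,…,f_m with f_l ∈ F_{σ_l,β_l}(H) such that for every i ∈ I and every l ∈ {1,…,m}, f_l((𝐲_i)_l) = (𝐅_i)_l and (𝐮_i)_l ∈ ∂f_l((𝐲_i)_l); (ii) for every l ∈ {1,…,m} and all i, j ∈ I, (𝐅_i)_l ≥ (𝐅_j)_l + ⟨(𝐮_j)_l, (𝐲_i)_l − (𝐲_j)_l⟩ + (σ_l/2)‖(𝐲_i)_l − (𝐲_j)_l‖² + c_l‖(𝐮_i)_l − (𝐮_j)_l − σ_l((𝐲_i)_l − (𝐲_j)_l)‖², where c_l = 1/(2(β_l − σ_l)) if β_l < +∞ and c_l = 0 if β_l = +∞. -/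

import Mathlib

open scoped ENNReal

/-- `u` is a subgradient of `f` at `x`: `f z ≥ f x + ⟨u, z - x⟩` for all `z`. -/
def IsSubgradientAt {H : Type*} [NormedAddCommGroup H] [InnerProductSpace ℝ H]
    (f : H → ℝ) (u x : H) : Prop :=
  ∀ z : H, f x + (inner ℝ u (z - x) : ℝ) ≤ f z

/-- `f` is `σ`-strongly convex: `f - (σ/2)‖·‖²` is convex. -/
def StronglyConvex {H : Type*} [NormedAddCommGroup H] [InnerProductSpace ℝ H]
    (σ : ℝ) (f : H → ℝ) : Prop :=
  ConvexOn ℝ Set.univ (fun x => f x - σ / 2 * ‖x‖ ^ 2)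

/-- `f` is `β`-smooth: differentiable with `β`-Lipschitz gradient. -/
def IsSmoothWith {H : Type*} [NormedAddCommGroup H] [InnerProductSpace ℝ H]
    [CompleteSpace H] (β : ℝ) (f : H → ℝ) : Prop :=
  Differentiable ℝ f ∧ ∀ x y : H, ‖gradient f x - gradient f y‖ ≤ β * ‖x - y‖

/-- Membership in the function class `F_{σ,β}(H)`: σ-strongly convex, and β-smooth
if `β < +∞`, lower semicontinuous if `β = +∞`. -/
def MemFClass {H : Type*} [NormedAddCommGroup H] [InnerProductSpace ℝ H]
    [CompleteSpace H] (σ : ℝ) (β : ℝ≥0∞) (f : H → ℝ) : Prop :=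
  StronglyConvex σ f ∧ (β ≠ ⊤ → IsSmoothWith β.toReal f) ∧
    (β = ⊤ → LowerSemicontinuous f)

/-- The coefficient `c = 1/(2(β−σ))` if `β < +∞`, and `c = 0` if `β = +∞`. -/
noncomputable def interpCoeff (σ : ℝ) (β : ℝ≥0∞) : ℝ :=
  if β = ⊤ then 0 else 1 / (2 * (β.toReal - σ))


set_option linter.unusedSectionVars false

open RealInnerProductSpace InnerProductSpace Set



section Basic
variable {H : Type*} [NormedAddCommGroup H] [InnerProductSpace ℝ H] [CompleteSpace H]

/-- helper: `a ≤ b + t*K` for all small positive `t` implies `a ≤ b`. -/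
lemma le_of_forall_small {a b K : ℝ} (hK : 0 ≤ K)
    (h : ∀ t : ℝ, 0 < t → t ≤ 1 → a ≤ b + t * K) : a ≤ b := by
  refine le_of_forall_pos_le_add fun ε hε => ?_
  have ht : 0 < min 1 (ε / (K + 1)) := lt_min one_pos (by positivity)
  have h1 := h _ ht (min_le_left _ _)
  have h2 : min 1 (ε / (K + 1)) * K ≤ ε := by
    calc min 1 (ε / (K + 1)) * K ≤ ε / (K + 1) * K :=
          mul_le_mul_of_nonneg_right (min_le_right _ _) hK
      _ ≤ ε := by rw [div_mul_eq_mul_div, div_le_iff₀ (by positivity)]; nlinarith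
  linarith

/-- quadratic two-sided bound gives a gradient. -/
lemma hasGradientAt_of_quad {f : H → ℝ} {g x : H} {C : ℝ}
    (h : ∀ z, |f z - f x - ⟪g, z - x⟫_ℝ| ≤ C * ‖z - x‖ ^ 2) :
    HasGradientAt f g x := by
  rw [hasGradientAt_iff_hasFDerivAt, hasFDerivAt_iff_isLittleO_nhds_zero]
  rw [Asymptotics.isLittleO_iff]
  intro c hc
  have hC : (0:ℝ) < max C 1 := lt_max_of_lt_right one_pos
  filter_upwards [Metric.ball_mem_nhds (0:H) (show (0:ℝ) < c / max C 1 by positivity)]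
    with w hw
  have hw' : ‖w‖ ≤ c / max C 1 := by
    rw [Metric.mem_ball, dist_zero_right] at hw; exact le_of_lt hw
  have h2 := h (x + w)
  simp only [add_sub_cancel_left] at h2
  have h3 : |f (x + w) - f x - ⟪g, w⟫_ℝ| ≤ max C 1 * ‖w‖ ^ 2 := by
    refine h2.trans (mul_le_mul_of_nonneg_right (le_max_left _ _) (by positivity))
  have : max C 1 * ‖w‖ ^ 2 ≤ c * ‖w‖ := by
    have := mul_le_mul_of_nonneg_right hw' (norm_nonneg w)
    calc max C 1 * ‖w‖ ^ 2 = max C 1 * (‖w‖ * ‖w‖) := by ring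
      _ ≤ max C 1 * (c / max C 1 * ‖w‖) :=
          mul_le_mul_of_nonneg_left this (le_of_lt hC)
      _ = c * ‖w‖ := by field_simp
  have h4 : ‖f (x + w) - f x - (toDual ℝ H g) w‖ ≤ c * ‖w‖ := by
    simpa [toDual_apply_apply, Real.norm_eq_abs] using h3.trans this
  simpa using h4

lemma norm_add_sq' (x d : H) : ‖x + d‖ ^ 2 = ‖x‖ ^ 2 + 2 * ⟪x, d⟫_ℝ + ‖d‖ ^ 2 := by
  rw [← real_inner_self_eq_norm_sq, ← real_inner_self_eq_norm_sq, ← real_inner_self_eq_norm_sq]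
  rw [inner_add_add_self, real_inner_comm d x]; ring

lemma hasGradientAt_half_sq (c : ℝ) (x : H) :
    HasGradientAt (fun y => c / 2 * ‖y‖ ^ 2) (c • x) x := by
  apply hasGradientAt_of_quad (C := |c| / 2)
  intro z
  have hz : ‖z‖ ^ 2 = ‖x‖ ^ 2 + 2 * ⟪x, z - x⟫_ℝ + ‖z - x‖ ^ 2 := by
    have := norm_add_sq' x (z - x); simpa using this
  have : c / 2 * ‖z‖ ^ 2 - c / 2 * ‖x‖ ^ 2 - ⟪c • x, z - x⟫_ℝ = c / 2 * ‖z - x‖ ^ 2 := by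
    rw [real_inner_smul_left, hz]; ring
  rw [this, abs_mul, abs_of_nonneg (by positivity : (0:ℝ) ≤ ‖z - x‖ ^ 2)]
  gcongr
  rw [abs_div]; simp

lemma HasGradientAt.add' {f₁ f₂ : H → ℝ} {g₁ g₂ x : H}
    (h₁ : HasGradientAt f₁ g₁ x) (h₂ : HasGradientAt f₂ g₂ x) :
    HasGradientAt (fun y => f₁ y + f₂ y) (g₁ + g₂) x := by
  rw [hasGradientAt_iff_hasFDerivAt] at *
  rw [map_add]; exact h₁.add h₂

lemma HasGradientAt.sub' {f₁ f₂ : H → ℝ} {g₁ g₂ x : H}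
    (h₁ : HasGradientAt f₁ g₁ x) (h₂ : HasGradientAt f₂ g₂ x) :
    HasGradientAt (fun y => f₁ y - f₂ y) (g₁ - g₂) x := by
  rw [hasGradientAt_iff_hasFDerivAt] at *
  rw [map_sub]; exact h₁.sub h₂

lemma HasGradientAt.gradient_eq {f : H → ℝ} {g x : H} (h : HasGradientAt f g x) :
    _root_.gradient f x = g :=
  (h.hasFDerivAt.differentiableAt.hasGradientAt.unique h)

end Basic

section Convexity
variable {H : Type*} [NormedAddCommGroup H] [InnerProductSpace ℝ H] [CompleteSpace H]

/-- strong-convexity upgrade of the subgradient inequality. -/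
lemma strongly_subgrad {f : H → ℝ} {μ : ℝ} (hμ : 0 ≤ μ)
    (hconv : ConvexOn ℝ Set.univ (fun x => f x - μ / 2 * ‖x‖ ^ 2))
    {u x : H} (hu : ∀ z, f x + ⟪u, z - x⟫_ℝ ≤ f z) (z : H) :
    f x + ⟪u, z - x⟫_ℝ + μ / 2 * ‖z - x‖ ^ 2 ≤ f z := by
  set d := z - x with hd
  have hz : z = x + d := by rw [hd]; abel
  refine le_of_forall_small (K := μ / 2 * ‖d‖ ^ 2) (by positivity) fun t ht ht1 => ?_
  have hc := hconv.2 (Set.mem_univ x) (Set.mem_univ z)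
    (show (0:ℝ) ≤ 1 - t by linarith) (le_of_lt ht) (by ring)
  have hcomb : (1 - t) • x + t • z = x + t • d := by
    rw [hz]; rw [sub_smul, one_smul, smul_add]; abel
  rw [hcomb] at hc
  simp only [smul_eq_mul] at hc
  have hs := hu (x + t • d)
  have hsd : ⟪u, x + t • d - x⟫_ℝ = t * ⟪u, d⟫_ℝ := by
    rw [add_sub_cancel_left, real_inner_smul_right]
  rw [hsd] at hs
  have n1 : ‖x + t • d‖ ^ 2 = ‖x‖ ^ 2 + 2 * (t * ⟪x, d⟫_ℝ) + t ^ 2 * ‖d‖ ^ 2 := by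
    rw [norm_add_sq', real_inner_smul_right, norm_smul, Real.norm_eq_abs,
      abs_of_pos ht, mul_pow]
  have n2 : ‖z‖ ^ 2 = ‖x‖ ^ 2 + 2 * ⟪x, d⟫_ℝ + ‖d‖ ^ 2 := by rw [hz, norm_add_sq']
  rw [n1, n2] at hc
  have key : t * (f x + ⟪u, d⟫_ℝ + μ / 2 * ‖d‖ ^ 2) ≤
      t * (f z + t * (μ / 2 * ‖d‖ ^ 2)) := by nlinarith [hc, hs]
  have := le_of_mul_le_mul_left (by linarith [key] : t * (f x + ⟪u, d⟫_ℝ + μ / 2 * ‖d‖ ^ 2) ≤ t * (f z + t * (μ / 2 * ‖d‖ ^ 2))) ht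
  linarith

/-- a differentiable function satisfying the gradient inequality is convex. -/
lemma convexOn_of_grad_ineq {f : H → ℝ}
    (h : ∀ y z : H, f y + ⟪gradient f y, z - y⟫_ℝ ≤ f z) :
    ConvexOn ℝ Set.univ f := by
  refine ⟨convex_univ, fun x _ z _ a b ha hb hab => ?_⟩
  set m := a • x + b • z with hm
  have h1 := h m x
  have h2 := h m z
  have e : a • (x - m) + b • (z - m) = 0 := by
    have hb' : b = 1 - a := by linarith
    rw [hm, hb']; module
  have e2 : a * ⟪gradient f m, x - m⟫_ℝ + b * ⟪gradient f m, z - m⟫_ℝ = 0 := by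
    rw [← real_inner_smul_right, ← real_inner_smul_right, ← inner_add_right, e,
      inner_zero_right]
  have h1' := mul_le_mul_of_nonneg_left h1 ha
  have h2' := mul_le_mul_of_nonneg_left h2 hb
  have hfm : a * f m + b * f m = f m := by rw [← add_mul, hab, one_mul]
  simp only [smul_eq_mul]
  nlinarith [h1', h2']

/-- descent-type lower bound plus convexity gives the gradient inequality. -/
lemma grad_ineq_of_convex {f : H → ℝ} {L : ℝ} (hL : 0 ≤ L)
    (hconv : ConvexOn ℝ Set.univ f)
    (hlow : ∀ y z : H, f y + ⟪gradient f y, z - y⟫_ℝ - L / 2 * ‖z - y‖ ^ 2 ≤ f z)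
    (y z : H) : f y + ⟪gradient f y, z - y⟫_ℝ ≤ f z := by
  set d := z - y with hd
  have hz : z = y + d := by rw [hd]; abel
  refine le_of_forall_small (K := L / 2 * ‖d‖ ^ 2) (by positivity) fun t ht ht1 => ?_
  have hc := hconv.2 (Set.mem_univ y) (Set.mem_univ z)
    (show (0:ℝ) ≤ 1 - t by linarith) (le_of_lt ht) (by ring)
  have hcomb : (1 - t) • y + t • z = y + t • d := by
    rw [hz]; rw [sub_smul, one_smul, smul_add]; abel
  rw [hcomb] at hc
  simp only [smul_eq_mul] at hc
  have hlow' := hlow y (y + t • d)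
  have hsd : ⟪gradient f y, y + t • d - y⟫_ℝ = t * ⟪gradient f y, d⟫_ℝ := by
    rw [add_sub_cancel_left, real_inner_smul_right]
  have hns : ‖y + t • d - y‖ ^ 2 = t ^ 2 * ‖d‖ ^ 2 := by
    rw [add_sub_cancel_left, norm_smul, Real.norm_eq_abs, abs_of_pos ht, mul_pow]
  rw [hsd, hns] at hlow'
  have key : t * (f y + ⟪gradient f y, d⟫_ℝ) ≤ t * (f z + t * (L / 2 * ‖d‖ ^ 2)) := by
    nlinarith [hc, hlow']
  have := le_of_mul_le_mul_left key ht
  linarith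

/-- cocoercivity for convex functions with a descent property. -/
lemma cocoercivity {f : H → ℝ} {B : ℝ} (hB : 0 < B)
    (hgrad : ∀ y z : H, f y + ⟪gradient f y, z - y⟫_ℝ ≤ f z)
    (hdesc : ∀ y z : H, f z ≤ f y + ⟪gradient f y, z - y⟫_ℝ + B / 2 * ‖z - y‖ ^ 2)
    (x y : H) :
    f x + ⟪gradient f x, y - x⟫_ℝ + 1 / (2 * B) * ‖gradient f y - gradient f x‖ ^ 2 ≤ f y := by
  set gx := gradient f x
  set gy := gradient f y
  set w := y - (1 / B) • (gy - gx) with hw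
  have h1 := hdesc y w
  have h2 := hgrad x w
  have e1 : ⟪gy, w - y⟫_ℝ = -(1 / B) * ⟪gy, gy - gx⟫_ℝ := by
    rw [hw]; rw [sub_sub_cancel_left, inner_neg_right, real_inner_smul_right]; ring
  have e2 : ‖w - y‖ ^ 2 = (1 / B) ^ 2 * ‖gy - gx‖ ^ 2 := by
    rw [hw, sub_sub_cancel_left, norm_neg, norm_smul, Real.norm_eq_abs,
      abs_of_pos (by positivity : (0:ℝ) < 1 / B), mul_pow]
  have e3 : ⟪gx, w - x⟫_ℝ = ⟪gx, y - x⟫_ℝ - (1 / B) * ⟪gx, gy - gx⟫_ℝ := by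
    rw [hw]; rw [show y - (1 / B) • (gy - gx) - x = (y - x) - (1 / B) • (gy - gx) by abel,
      inner_sub_right, real_inner_smul_right]
  have e4 : ⟪gy, gy - gx⟫_ℝ - ⟪gx, gy - gx⟫_ℝ = ‖gy - gx‖ ^ 2 := by
    rw [← inner_sub_left, real_inner_self_eq_norm_sq]
  rw [e1, e2] at h1
  rw [e3] at h2
  have hB' : (0:ℝ) < 2 * B := by linarith
  have : f x + ⟪gx, y - x⟫_ℝ ≤ f y - 1 / (2 * B) * ‖gy - gx‖ ^ 2 := by
    have expand : -(1 / B) * ⟪gy, gy - gx⟫_ℝ + B / 2 * ((1 / B) ^ 2 * ‖gy - gx‖ ^ 2)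
        + (1 / B) * ⟪gx, gy - gx⟫_ℝ = -(1 / (2 * B)) * ‖gy - gx‖ ^ 2 - (1/B) * ‖gy - gx‖^2 + (1/B) * ‖gy-gx‖^2 := by
      rw [← e4]; field_simp; ring
    nlinarith [h1, h2]
  linarith

end Convexity

section Descent
variable {H : Type*} [NormedAddCommGroup H] [InnerProductSpace ℝ H] [CompleteSpace H]

lemma line_hasDerivAt (y d : H) (t : ℝ) : HasDerivAt (fun s : ℝ => y + s • d) d t := by
  simpa using ((hasDerivAt_id t).smul_const d).const_add y

lemma comp_line_hasDerivAt {f : H → ℝ} (hf : Differentiable ℝ f) (y d : H) (t : ℝ) :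
    HasDerivAt (fun s : ℝ => f (y + s • d)) ⟪gradient f (y + t • d), d⟫_ℝ t := by
  have h1 := (hf (y + t • d)).hasGradientAt.hasFDerivAt
  have h2 := line_hasDerivAt y d t
  have := h1.comp_hasDerivAt t h2
  simpa [InnerProductSpace.toDual_apply_apply, Function.comp_def] using this

/-- two-sided descent lemma for functions with Lipschitz gradient. -/
lemma abs_descent {f : H → ℝ} {L : ℝ} (hf : Differentiable ℝ f)
    (hlip : ∀ x y : H, ‖gradient f x - gradient f y‖ ≤ L * ‖x - y‖) (y z : H) :
    |f z - f y - ⟪gradient f y, z - y⟫_ℝ| ≤ L / 2 * ‖z - y‖ ^ 2 := by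
  set d := z - y with hd
  have key : ∀ s : ℝ, |s| = 1 → s * (f z - f y - ⟪gradient f y, d⟫_ℝ) ≤ L / 2 * ‖d‖ ^ 2 := by
    intro s hs
    set χ : ℝ → ℝ := fun t => s * (f (y + t • d) - t * ⟪gradient f y, d⟫_ℝ)
      - L / 2 * ‖d‖ ^ 2 * t ^ 2 with hχ
    have hder : ∀ t : ℝ, HasDerivAt χ
        (s * (⟪gradient f (y + t • d), d⟫_ℝ - ⟪gradient f y, d⟫_ℝ)
          - L / 2 * ‖d‖ ^ 2 * (2 * t)) t := by
      intro t
      have h1 := comp_line_hasDerivAt hf y d t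
      have h2 : HasDerivAt (fun t : ℝ => t * ⟪gradient f y, d⟫_ℝ) ⟪gradient f y, d⟫_ℝ t :=
        hasDerivAt_mul_const _
      have h3 : HasDerivAt (fun t : ℝ => L / 2 * ‖d‖ ^ 2 * t ^ 2)
          (L / 2 * ‖d‖ ^ 2 * (2 * t)) t := by
        have := (hasDerivAt_pow 2 t).const_mul (L / 2 * ‖d‖ ^ 2)
        simpa [pow_one, mul_comm, mul_assoc, mul_left_comm] using this
      exact ((h1.sub h2).const_mul s).sub h3
    have hcont : Continuous χ := by
      have : Continuous fun t : ℝ => f (y + t • d) :=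
        hf.continuous.comp (by continuity)
      continuity
    have hmono : AntitoneOn χ (Set.Icc (0:ℝ) 1) := by
      apply antitoneOn_of_deriv_nonpos (convex_Icc 0 1) hcont.continuousOn
      · intro t _
        exact (hder t).differentiableAt.differentiableWithinAt
      · intro t htmem
        rw [interior_Icc] at htmem
        rw [(hder t).deriv]
        have hip : s * (⟪gradient f (y + t • d), d⟫_ℝ - ⟪gradient f y, d⟫_ℝ)
            ≤ L * t * ‖d‖ ^ 2 := by
          have hcs : |⟪gradient f (y + t • d) - gradient f y, d⟫_ℝ|
              ≤ ‖gradient f (y + t • d) - gradient f y‖ * ‖d‖ :=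
            abs_real_inner_le_norm _ _
          have hlip' := hlip (y + t • d) y
          have hnn : ‖y + t • d - y‖ = t * ‖d‖ := by
            rw [add_sub_cancel_left, norm_smul, Real.norm_eq_abs, abs_of_pos htmem.1]
          rw [hnn] at hlip'
          have h5 : s * (⟪gradient f (y + t • d), d⟫_ℝ - ⟪gradient f y, d⟫_ℝ)
              ≤ |⟪gradient f (y + t • d) - gradient f y, d⟫_ℝ| := by
            rw [← inner_sub_left]
            calc s * ⟪gradient f (y + t • d) - gradient f y, d⟫_ℝ
                ≤ |s * ⟪gradient f (y + t • d) - gradient f y, d⟫_ℝ| := le_abs_self _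
              _ = |⟪gradient f (y + t • d) - gradient f y, d⟫_ℝ| := by
                  rw [abs_mul, hs, one_mul]
          calc s * (⟪gradient f (y + t • d), d⟫_ℝ - ⟪gradient f y, d⟫_ℝ)
              ≤ ‖gradient f (y + t • d) - gradient f y‖ * ‖d‖ := h5.trans hcs
            _ ≤ L * (t * ‖d‖) * ‖d‖ :=
                mul_le_mul_of_nonneg_right hlip' (norm_nonneg d)
            _ = L * t * ‖d‖ ^ 2 := by ring
        nlinarith [hip]
    have h01 := hmono (Set.mem_Icc.2 ⟨le_refl 0, zero_le_one⟩)
      (Set.mem_Icc.2 ⟨zero_le_one, le_refl 1⟩) zero_le_one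
    have e0 : χ 0 = s * f y := by simp [hχ]
    have e1 : χ 1 = s * (f z - ⟪gradient f y, d⟫_ℝ) - L / 2 * ‖d‖ ^ 2 := by
      have hyd : y + d = z := by rw [hd]; abel
      simp [hχ, one_smul, hyd]
    rw [e0, e1] at h01
    nlinarith [h01]
  rw [abs_le]
  constructor
  · have := key (-1) (by norm_num); nlinarith [this]
  · have := key 1 (by norm_num); nlinarith [this]

end Descent

section Min
variable {H : Type*} [NormedAddCommGroup H] [InnerProductSpace ℝ H] [CompleteSpace H]

/-- a continuous strongly convex bounded-below function attains its minimum. -/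
lemma exists_min_of_stronglyConvex {ψ : H → ℝ} {μ : ℝ} (hμ : 0 < μ)
    (hc : Continuous ψ) (hconv : ConvexOn ℝ Set.univ (fun v => ψ v - μ / 2 * ‖v‖ ^ 2))
    (hbdd : BddBelow (Set.range ψ)) : ∃ v, ∀ w, ψ v ≤ ψ w := by
  haveI : Nonempty H := ⟨0⟩
  set d := ⨅ w, ψ w with hdd
  have hle : ∀ w, d ≤ ψ w := fun w => ciInf_le hbdd w
  have hex : ∀ n : ℕ, ∃ v, ψ v < d + 1 / (n + 1) := by
    intro n
    have : d < d + 1 / (n + 1) := by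
      have : (0:ℝ) < 1 / (n + 1) := by positivity
      linarith
    exact exists_lt_of_ciInf_lt this
  choose v hv using hex
  -- strong convexity at midpoints
  have hmid : ∀ n m : ℕ, μ / 8 * ‖v n - v m‖ ^ 2 ≤ 1 / 2 * (1 / (n + 1) + 1 / (m + 1)) := by
    intro n m
    have hc2 := hconv.2 (Set.mem_univ (v n)) (Set.mem_univ (v m))
      (by norm_num : (0:ℝ) ≤ 1/2) (by norm_num : (0:ℝ) ≤ 1/2) (by norm_num)
    simp only [smul_eq_mul] at hc2
    have hpar : ‖(1/2 : ℝ) • v n + (1/2 : ℝ) • v m‖ ^ 2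
        = 1 / 2 * ‖v n‖ ^ 2 + 1 / 2 * ‖v m‖ ^ 2 - 1 / 4 * ‖v n - v m‖ ^ 2 := by
      have h1 : ‖v n + v m‖ ^ 2 + ‖v n - v m‖ ^ 2 = 2 * ‖v n‖ ^ 2 + 2 * ‖v m‖ ^ 2 := by
        have := parallelogram_law_with_norm ℝ (v n) (v m)
        nlinarith [this]
      have h2 : (1/2 : ℝ) • v n + (1/2 : ℝ) • v m = (1/2 : ℝ) • (v n + v m) := by
        rw [smul_add]
      rw [h2, norm_smul, Real.norm_eq_abs, mul_pow]
      rw [abs_of_pos (by norm_num : (0:ℝ) < 1/2)]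
      nlinarith [h1]
    have hdm := hle ((1/2 : ℝ) • v n + (1/2 : ℝ) • v m)
    have hn := hv n
    have hm := hv m
    rw [hpar] at hc2
    nlinarith [hc2, hdm, hn, hm]
  have hcauchy : CauchySeq v := by
    rw [Metric.cauchySeq_iff]
    intro ε hε
    obtain ⟨N, hN⟩ := exists_nat_gt (8 / (μ * ε ^ 2))
    refine ⟨N, fun n hn m hm => ?_⟩
    have hb1 : (1:ℝ) / (n + 1) ≤ 1 / (N + 1) := by
      apply one_div_le_one_div_of_le (by positivity)
      have : (N:ℝ) ≤ n := Nat.cast_le.2 hn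
      linarith
    have hb2 : (1:ℝ) / (m + 1) ≤ 1 / (N + 1) := by
      apply one_div_le_one_div_of_le (by positivity)
      have : (N:ℝ) ≤ m := Nat.cast_le.2 hm
      linarith
    have h3 := hmid n m
    have h4 : μ / 8 * ‖v n - v m‖ ^ 2 ≤ 1 / (N + 1) := by linarith
    have h5 : (1:ℝ) / (N + 1) < μ * ε ^ 2 / 8 := by
      rw [div_lt_iff₀ (by positivity)]
      have h6 : 8 / (μ * ε ^ 2) < N + 1 := by linarith [hN]
      rw [div_lt_iff₀ (by positivity)] at h6
      nlinarith [h6]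
    have h7 : ‖v n - v m‖ ^ 2 < ε ^ 2 := by nlinarith [h4, h5]
    rw [dist_eq_norm]
    nlinarith [norm_nonneg (v n - v m), h7]
  obtain ⟨vl, hvl⟩ := cauchySeq_tendsto_of_complete hcauchy
  refine ⟨vl, fun w => (?_ : ψ vl ≤ d).trans (hle w)⟩
  have htend : Filter.Tendsto (fun n => ψ (v n)) Filter.atTop (nhds (ψ vl)) :=
    (hc.continuousAt.tendsto.comp hvl)
  refine le_of_forall_pos_le_add fun ε hε => ?_
  have hev : ∀ᶠ n in Filter.atTop, ψ (v n) ≤ d + ε := by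
    have ht2 : Filter.Tendsto (fun n : ℕ => (1:ℝ) / (n + 1)) Filter.atTop (nhds 0) :=
      tendsto_one_div_add_atTop_nhds_zero_nat
    filter_upwards [ht2.eventually_lt_const hε] with n hn
    have := hv n
    linarith
  exact le_of_tendsto htend hev

end Min

section Sup
variable {H : Type*} [NormedAddCommGroup H] [InnerProductSpace ℝ H] [CompleteSpace H]
variable {ι : Type*}

lemma continuous_sup' {s : Finset ι} (hs : s.Nonempty) {g : ι → H → ℝ}
    (hg : ∀ i, Continuous (g i)) :
    Continuous fun x => s.sup' hs fun i => g i x := by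
  induction hs using Finset.Nonempty.cons_induction with
  | singleton a => simpa using hg a
  | cons a s ha hs ih =>
      have he : (fun x : H => (Finset.cons a s ha).sup' (Finset.cons_nonempty ha) fun i => g i x)
          = fun x => max (g a x) (s.sup' hs fun i => g i x) := by
        funext x; rw [Finset.sup'_cons]
      rw [he]
      exact (hg a).max ih

lemma convexOn_sup' {s : Finset ι} (hs : s.Nonempty) {g : ι → H → ℝ}
    (hg : ∀ i, ConvexOn ℝ Set.univ (g i)) :
    ConvexOn ℝ Set.univ fun x => s.sup' hs fun i => g i x := by
  induction hs using Finset.Nonempty.cons_induction with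
  | singleton a => simpa using hg a
  | cons a s ha hs ih =>
      have he : (fun x : H => (Finset.cons a s ha).sup' (Finset.cons_nonempty ha) fun i => g i x)
          = fun x => max (g a x) (s.sup' hs fun i => g i x) := by
        funext x; rw [Finset.sup'_cons]
      rw [he]
      exact (hg a).sup ih

lemma convexOn_affine (c : ℝ) (w : H) : ConvexOn ℝ Set.univ fun x => c + ⟪w, x⟫_ℝ := by
  refine ⟨convex_univ, fun x _ z _ a b ha hb hab => ?_⟩
  simp only [smul_eq_mul]
  rw [inner_add_right, real_inner_smul_right, real_inner_smul_right]
  have hcc : a * c + b * c = c := by rw [← add_mul, hab, one_mul]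
  linarith

lemma sup'_sub {s : Finset ι} (hs : s.Nonempty) (g : ι → ℝ) (c : ℝ) :
    s.sup' hs g - c = s.sup' hs fun i => g i - c := by
  have := Finset.comp_sup'_eq_sup'_comp hs (f := g) (fun r : ℝ => r - c)
    (fun x y => by simp [max_sub_sub_right])
  simpa [Function.comp] using this

end Sup

section MaxConstruction
variable {H : Type*} [NormedAddCommGroup H] [InnerProductSpace ℝ H] [CompleteSpace H]
variable {ι : Type*} [Fintype ι]

/-- construction of a strongly convex interpolating function as a max of
quadratic lower models. -/
lemma max_construction [Nonempty ι] {μ : ℝ} (hμ : 0 ≤ μ) (y : ι → H) (F : ι → ℝ) (u : ι → H)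
    (hyp : ∀ i j, F j + ⟪u j, y i - y j⟫_ℝ + μ / 2 * ‖y i - y j‖ ^ 2 ≤ F i) :
    ∃ f : H → ℝ, Continuous f ∧
      ConvexOn ℝ Set.univ (fun x => f x - μ / 2 * ‖x‖ ^ 2) ∧
      (∀ j, f (y j) = F j) ∧
      (∀ j, ∀ z, f (y j) + ⟪u j, z - y j⟫_ℝ ≤ f z) := by
  have hne : (Finset.univ : Finset ι).Nonempty := Finset.univ_nonempty
  set q : ι → H → ℝ := fun i x => F i + ⟪u i, x - y i⟫_ℝ + μ / 2 * ‖x - y i‖ ^ 2 with hq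
  refine ⟨fun x => Finset.univ.sup' hne fun i => q i x, ?_, ?_, ?_, ?_⟩
  · apply continuous_sup' hne
    intro i
    apply Continuous.add
    · apply Continuous.add continuous_const
      exact Continuous.inner continuous_const (continuous_id.sub continuous_const)
    · continuity
  · have he : (fun x => (Finset.univ.sup' hne fun i => q i x) - μ / 2 * ‖x‖ ^ 2)
        = fun x => Finset.univ.sup' hne fun i => q i x - μ / 2 * ‖x‖ ^ 2 := by
      funext x; rw [sup'_sub hne]
    rw [he]
    apply convexOn_sup' hne
    intro i
    have he2 : (fun x => q i x - μ / 2 * ‖x‖ ^ 2)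
        = fun x => (F i + μ / 2 * ‖y i‖ ^ 2 - ⟪u i, y i⟫_ℝ) + ⟪u i - μ • y i, x⟫_ℝ := by
      funext x
      have h1 : ⟪u i, x - y i⟫_ℝ = ⟪u i, x⟫_ℝ - ⟪u i, y i⟫_ℝ := inner_sub_right _ _ _
      have h3 : ‖x - y i‖ ^ 2 = ‖x‖ ^ 2 - 2 * ⟪x, y i⟫_ℝ + ‖y i‖ ^ 2 := by
        have h0 := norm_add_sq' (x - y i) (y i)
        have h2 : x - y i + y i = x := by abel
        rw [h2] at h0
        have h3' : ⟪x - y i, y i⟫_ℝ = ⟪x, y i⟫_ℝ - ⟪y i, y i⟫_ℝ := by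
          rw [inner_sub_left]
        rw [h3', real_inner_self_eq_norm_sq] at h0
        linarith
      have h4 : ⟪u i - μ • y i, x⟫_ℝ = ⟪u i, x⟫_ℝ - μ * ⟪y i, x⟫_ℝ := by
        rw [inner_sub_left, real_inner_smul_left]
      have h5 : ⟪y i, x⟫_ℝ = ⟪x, y i⟫_ℝ := real_inner_comm _ _
      simp only [hq]
      rw [h1, h3, h4, h5]
      ring
    rw [he2]
    exact convexOn_affine _ _
  · intro j
    apply le_antisymm
    · apply Finset.sup'_le
      intro i _
      rw [hq]
      simp only []
      have := hyp j i
      linarith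
    · have := Finset.le_sup' (fun i => q i (y j)) (Finset.mem_univ j)
      have he : q j (y j) = F j := by rw [hq]; simp
      linarith
  · intro j z
    have h2 := Finset.le_sup' (fun i => q i z) (Finset.mem_univ j)
    have he : q j (y j) = F j := by rw [hq]; simp
    have hqz : q j z = F j + ⟪u j, z - y j⟫_ℝ + μ / 2 * ‖z - y j‖ ^ 2 := rfl
    have hfy : Finset.univ.sup' hne (fun i => q i (y j)) = F j := by
      apply le_antisymm
      · apply Finset.sup'_le
        intro i _
        have := hyp j i
        rw [hq]; simp only []; linarith
      · have := Finset.le_sup' (fun i => q i (y j)) (Finset.mem_univ j)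
        rw [he] at this; exact this
    show (Finset.univ.sup' hne fun i => q i (y j)) + ⟪u j, z - y j⟫_ℝ
        ≤ Finset.univ.sup' hne fun i => q i z
    rw [hfy]
    have hnorm : (0:ℝ) ≤ μ / 2 * ‖z - y j‖ ^ 2 := by positivity
    rw [hqz] at h2
    linarith

end MaxConstruction

section SmoothConstruction
variable {H : Type*} [NormedAddCommGroup H] [InnerProductSpace ℝ H] [CompleteSpace H]
variable {ι : Type*} [Fintype ι]

lemma smooth_construction [Nonempty ι] {L : ℝ} (hL : 0 < L)
    (y : ι → H) (F : ι → ℝ) (v : ι → H)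
    (hyp : ∀ i j, F j + ⟪v j, y i - y j⟫_ℝ + 1 / (2 * L) * ‖v i - v j‖ ^ 2 ≤ F i) :
    ∃ f : H → ℝ, ConvexOn ℝ Set.univ f ∧ Differentiable ℝ f ∧
      (∀ x z, ‖gradient f x - gradient f z‖ ≤ L * ‖x - z‖) ∧
      (∀ j, f (y j) = F j) ∧
      (∀ j z, f (y j) + ⟪v j, z - y j⟫_ℝ ≤ f z) := by
  set μ : ℝ := 1 / L with hμdef
  have hμ : 0 < μ := by positivity
  have hμL : μ * L = 1 := by rw [hμdef]; field_simp
  set G : ι → ℝ := fun i => ⟪v i, y i⟫_ℝ - F i with hG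
  have hyp' : ∀ i j, G j + ⟪y j, v i - v j⟫_ℝ + μ / 2 * ‖v i - v j‖ ^ 2 ≤ G i := by
    intro i j
    have h0 := hyp j i
    have e1 : ⟪v i, y j - y i⟫_ℝ = ⟪v i, y j⟫_ℝ - ⟪v i, y i⟫_ℝ := inner_sub_right _ _ _
    have e2 : ⟪y j, v i - v j⟫_ℝ = ⟪y j, v i⟫_ℝ - ⟪y j, v j⟫_ℝ := inner_sub_right _ _ _
    have e3 : ⟪y j, v i⟫_ℝ = ⟪v i, y j⟫_ℝ := real_inner_comm _ _
    have e4 : ⟪y j, v j⟫_ℝ = ⟪v j, y j⟫_ℝ := real_inner_comm _ _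
    have e5 : ‖v j - v i‖ = ‖v i - v j‖ := norm_sub_rev _ _
    have e6 : μ / 2 = 1 / (2 * L) := by rw [hμdef]; ring
    rw [e1, e5] at h0
    rw [e2, e3, e4, e6, hG]
    linarith
  obtain ⟨g, hgc, hgconv, hgval, hgsub⟩ := max_construction hμ.le v G y hyp'
  have hgs : ∀ (j : ι) (w : H),
      g (v j) + ⟪y j, w - v j⟫_ℝ + μ / 2 * ‖w - v j‖ ^ 2 ≤ g w :=
    fun j w => strongly_subgrad hμ.le hgconv (hgsub j) w
  -- existence of the conjugate maximizer
  have hmin : ∀ x : H, ∃ w0 : H, ∀ w, g w0 - ⟪x, w0⟫_ℝ ≤ g w - ⟪x, w⟫_ℝ := by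
    intro x
    have hcont : Continuous fun w => g w - ⟪x, w⟫_ℝ :=
      hgc.sub (Continuous.inner continuous_const continuous_id)
    have hconv2 : ConvexOn ℝ Set.univ fun w => (g w - ⟪x, w⟫_ℝ) - μ / 2 * ‖w‖ ^ 2 := by
      have h1 := hgconv.add (convexOn_affine 0 (-x))
      have he : ((fun w => g w - μ / 2 * ‖w‖ ^ 2) + fun w => 0 + ⟪-x, w⟫_ℝ)
          = fun w => (g w - ⟪x, w⟫_ℝ) - μ / 2 * ‖w‖ ^ 2 := by
        funext w
        show (g w - μ / 2 * ‖w‖ ^ 2) + (0 + ⟪-x, w⟫_ℝ) = _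
        rw [inner_neg_left]; ring
      rwa [he] at h1
    have hbdd : BddBelow (Set.range fun w => g w - ⟪x, w⟫_ℝ) := by
      set i0 : ι := Classical.arbitrary ι
      refine ⟨G i0 - ⟪x, v i0⟫_ℝ - ‖y i0 - x‖ ^ 2 / (2 * μ), ?_⟩
      rintro t ⟨w, rfl⟩
      have h1 := hgs i0 w
      rw [hgval i0] at h1
      have e1 : ⟪y i0 - x, w - v i0⟫_ℝ = ⟪y i0, w - v i0⟫_ℝ - ⟪x, w⟫_ℝ + ⟪x, v i0⟫_ℝ := by
        simp only [inner_sub_left, inner_sub_right]; ring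
      have hcs : -(‖y i0 - x‖ * ‖w - v i0‖) ≤ ⟪y i0 - x, w - v i0⟫_ℝ :=
        neg_le_of_abs_le (abs_real_inner_le_norm _ _)
      have hquad : μ / 2 * ‖w - v i0‖ ^ 2 - ‖y i0 - x‖ * ‖w - v i0‖
          ≥ -(‖y i0 - x‖ ^ 2 / (2 * μ)) := by
        have hsq := sq_nonneg (μ * ‖w - v i0‖ - ‖y i0 - x‖)
        have hdiv : 2 * μ * (‖y i0 - x‖ ^ 2 / (2 * μ)) = ‖y i0 - x‖ ^ 2 := by
          field_simp
        have hmul : 2 * μ * (μ / 2 * ‖w - v i0‖ ^ 2 - ‖y i0 - x‖ * ‖w - v i0‖)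
            ≥ 2 * μ * (-(‖y i0 - x‖ ^ 2 / (2 * μ))) := by
          rw [mul_neg, hdiv]
          nlinarith [hsq]
        have h2μ : (0:ℝ) < 2 * μ := by linarith
        exact le_of_mul_le_mul_left hmul h2μ
      simp only []
      linarith
    exact exists_min_of_stronglyConvex hμ hcont hconv2 hbdd
  choose V hV using hmin
  set f : H → ℝ := fun x => ⟪x, V x⟫_ℝ - g (V x) with hf
  have hfdef : ∀ a, f a = ⟪a, V a⟫_ℝ - g (V a) := fun a => rfl
  have hsup : ∀ x w, ⟪x, w⟫_ℝ - g w ≤ f x := by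
    intro x w
    have h0 := hfdef x
    have := hV x w
    linarith
  have hpl : ∀ x, ∀ w, g (V x) + ⟪x, w - V x⟫_ℝ ≤ g w := by
    intro x w
    have := hV x w
    rw [inner_sub_right]
    linarith
  have hsubV : ∀ x w, g (V x) + ⟪x, w - V x⟫_ℝ + μ / 2 * ‖w - V x‖ ^ 2 ≤ g w :=
    fun x => strongly_subgrad hμ.le hgconv (hpl x)
  have hlow : ∀ x z, f x + ⟪V x, z - x⟫_ℝ ≤ f z := by
    intro x z
    have h1 := hsup z (V x)
    have e1 : ⟪z, V x⟫_ℝ = ⟪x, V x⟫_ℝ + ⟪V x, z - x⟫_ℝ := by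
      rw [inner_sub_right, real_inner_comm (V x) z, real_inner_comm (V x) x]; ring
    rw [e1] at h1
    have h0 := hfdef x
    linarith
  have hupp : ∀ x w0 : H, (∀ w, g w0 + ⟪x, w - w0⟫_ℝ + μ / 2 * ‖w - w0‖ ^ 2 ≤ g w) →
      ∀ z, f z ≤ (⟪x, w0⟫_ℝ - g w0) + ⟪w0, z - x⟫_ℝ + L / 2 * ‖z - x‖ ^ 2 := by
    intro x w0 hsg z
    have h1 := hsg (V z)
    have e1 : ⟪z - x, V z - w0⟫_ℝ
        = ⟪z, V z⟫_ℝ - ⟪z, w0⟫_ℝ - ⟪x, V z⟫_ℝ + ⟪x, w0⟫_ℝ := by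
      rw [inner_sub_left, inner_sub_right, inner_sub_right]; ring
    have e2 : ⟪w0, z - x⟫_ℝ = ⟪z, w0⟫_ℝ - ⟪x, w0⟫_ℝ := by
      rw [inner_sub_right, real_inner_comm w0 z, real_inner_comm w0 x]
    have e3 : ⟪x, V z - w0⟫_ℝ = ⟪x, V z⟫_ℝ - ⟪x, w0⟫_ℝ := inner_sub_right _ _ _
    have hcs : ⟪z - x, V z - w0⟫_ℝ ≤ ‖z - x‖ * ‖V z - w0‖ := real_inner_le_norm _ _
    have hamgm : ‖z - x‖ * ‖V z - w0‖ ≤ L / 2 * ‖z - x‖ ^ 2 + μ / 2 * ‖V z - w0‖ ^ 2 := by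
      nlinarith [sq_nonneg (‖V z - w0‖ - L * ‖z - x‖), hL, hμL,
        mul_nonneg (le_of_lt hμ) (sq_nonneg (‖V z - w0‖ - L * ‖z - x‖))]
    have hfz : f z = ⟪z, V z⟫_ℝ - g (V z) := hfdef z
    rw [e3] at h1
    linarith
  have hgradV : ∀ x, HasGradientAt f (V x) x := by
    intro x
    apply hasGradientAt_of_quad (C := L / 2)
    intro z
    rw [abs_le]
    have hu := hupp x (V x) (hsubV x) z
    have hfx : (⟪x, V x⟫_ℝ - g (V x)) = f x := (hfdef x).symm
    rw [hfx] at hu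
    have hl := hlow x z
    have hnn : (0:ℝ) ≤ L / 2 * ‖z - x‖ ^ 2 := by positivity
    constructor
    · have h9 : (0:ℝ) ≤ f z - f x - ⟪V x, z - x⟫_ℝ := by linarith
      exact le_trans (neg_nonpos.mpr hnn) h9
    · linarith
  have hgrad_eq : ∀ x, gradient f x = V x := fun x => (hgradV x).gradient_eq
  have hdiff : Differentiable ℝ f := fun x => (hgradV x).hasFDerivAt.differentiableAt
  have hlip : ∀ x z, ‖gradient f x - gradient f z‖ ≤ L * ‖x - z‖ := by
    intro x z
    rw [hgrad_eq, hgrad_eq]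
    have h1 := hsubV x (V z)
    have h2 := hsubV z (V x)
    have e1 : ⟪z, V x - V z⟫_ℝ = -⟪z, V z - V x⟫_ℝ := by
      rw [← inner_neg_right, neg_sub]
    have e2 : ‖V x - V z‖ = ‖V z - V x‖ := norm_sub_rev _ _
    have e3 : ⟪x, V z - V x⟫_ℝ - ⟪z, V z - V x⟫_ℝ = ⟪x - z, V z - V x⟫_ℝ := by
      rw [inner_sub_left]
    rw [e1, e2] at h2
    have hkey : μ * ‖V z - V x‖ ^ 2 ≤ -⟪x - z, V z - V x⟫_ℝ := by nlinarith [h1, h2]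
    have e4 : -⟪x - z, V z - V x⟫_ℝ = ⟪x - z, V x - V z⟫_ℝ := by
      rw [← inner_neg_right, neg_sub]
    have hcs : ⟪x - z, V x - V z⟫_ℝ ≤ ‖x - z‖ * ‖V x - V z‖ := real_inner_le_norm _ _
    rw [e4] at hkey
    rw [← e2] at hkey
    rcases eq_or_lt_of_le (norm_nonneg (V x - V z)) with h0 | h0
    · rw [← h0]
      positivity
    · nlinarith [hkey, hcs, h0, hμL, norm_nonneg (x - z)]
  have hval : ∀ j, f (y j) = F j := by
    intro j
    have hup : f (y j) ≤ ⟪y j, v j⟫_ℝ - g (v j) := by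
      have h1 := hgsub j (V (y j))
      have e1 : ⟪y j, V (y j) - v j⟫_ℝ = ⟪y j, V (y j)⟫_ℝ - ⟪y j, v j⟫_ℝ :=
        inner_sub_right _ _ _
      rw [e1] at h1
      have h0 := hfdef (y j)
      linarith
    have hlo := hsup (y j) (v j)
    have hGj : g (v j) = ⟪v j, y j⟫_ℝ - F j := by rw [hgval j, hG]
    have hcomm : ⟪y j, v j⟫_ℝ = ⟪v j, y j⟫_ℝ := real_inner_comm _ _
    rw [hGj, hcomm] at hup hlo
    linarith
  have haff : ∀ j z, f (y j) + ⟪v j, z - y j⟫_ℝ ≤ f z := by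
    intro j z
    have h1 := hsup z (v j)
    have hGj : g (v j) = ⟪v j, y j⟫_ℝ - F j := by rw [hgval j, hG]
    have e1 : ⟪z, v j⟫_ℝ = ⟪v j, y j⟫_ℝ + ⟪v j, z - y j⟫_ℝ := by
      rw [inner_sub_right, real_inner_comm (v j) z]; ring
    rw [hGj, e1] at h1
    rw [hval j]
    linarith
  have hconvf : ConvexOn ℝ Set.univ f := by
    refine ⟨convex_univ, fun x _ z _ a b ha hb hab => ?_⟩
    set m := a • x + b • z with hm
    have h1 := hsup x (V m)
    have h2 := hsup z (V m)
    have e1 : ⟪m, V m⟫_ℝ = a * ⟪x, V m⟫_ℝ + b * ⟪z, V m⟫_ℝ := by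
      rw [hm, inner_add_left, real_inner_smul_left, real_inner_smul_left]
    have hfm : f m = ⟪m, V m⟫_ℝ - g (V m) := hfdef m
    have hgm : a * g (V m) + b * g (V m) = g (V m) := by rw [← add_mul, hab, one_mul]
    have h1' := mul_le_mul_of_nonneg_left h1 ha
    have h2' := mul_le_mul_of_nonneg_left h2 hb
    simp only [smul_eq_mul]
    nlinarith [h1', h2']
  exact ⟨f, hconvf, hdiff, hlip, hval, haff⟩

end SmoothConstruction

section Single
variable {H : Type*} [NormedAddCommGroup H] [InnerProductSpace ℝ H] [CompleteSpace H]
variable {ι : Type*} [Fintype ι]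

theorem interp_single {σ : ℝ} {β : ℝ≥0∞} (hσ : 0 ≤ σ) (hβ : ENNReal.ofReal σ < β)
    (y : ι → H) (F : ι → ℝ) (u : ι → H) :
    (∃ f : H → ℝ, MemFClass σ β f ∧ ∀ i, f (y i) = F i ∧ IsSubgradientAt f (u i) (y i)) ↔
    ∀ i j, F j + ⟪u j, y i - y j⟫_ℝ + σ / 2 * ‖y i - y j‖ ^ 2
      + interpCoeff σ β * ‖u i - u j - σ • (y i - y j)‖ ^ 2 ≤ F i := by
  constructor
  · rintro ⟨f, ⟨hsc, hsm, hlsc⟩, hint⟩ i j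
    by_cases hβtop : β = ⊤
    · have hco : interpCoeff σ β = 0 := by rw [interpCoeff, if_pos hβtop]
      rw [hco, zero_mul, add_zero]
      have hstr := strongly_subgrad hσ hsc (fun z => (hint j).2 z) (y i)
      rw [(hint j).1] at hstr
      have := (hint i).1
      linarith
    · set B := β.toReal with hBdef
      have hBσ : σ < B := by
        have h1 := (ENNReal.toReal_lt_toReal (ENNReal.ofReal_ne_top) hβtop).mpr hβ
        rwa [ENNReal.toReal_ofReal hσ] at h1
      have hB0 : 0 ≤ B := by linarith
      obtain ⟨hdf, hlip⟩ := hsm hβtop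
      have habs := fun a b => abs_descent hdf hlip a b
      -- subgradients are gradients
      have ui_eq : ∀ k, u k = gradient f (y k) := by
        intro k
        set w := u k - gradient f (y k) with hw
        have hww : ‖w‖ ^ 2 ≤ 0 := by
          refine le_of_forall_small (K := B / 2 * ‖w‖ ^ 2) (by positivity) fun t ht ht1 => ?_
          have hsub := (hint k).2 (y k + t • w)
          have habs' := habs (y k) (y k + t • w)
          rw [add_sub_cancel_left] at hsub habs'
          have e1 : (inner ℝ (u k) (t • w) : ℝ) = t * ⟪u k, w⟫_ℝ := real_inner_smul_right _ _ _
          have e2 : ⟪gradient f (y k), t • w⟫_ℝ = t * ⟪gradient f (y k), w⟫_ℝ :=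
            real_inner_smul_right _ _ _
          have e3 : ‖t • w‖ ^ 2 = t ^ 2 * ‖w‖ ^ 2 := by
            rw [norm_smul, Real.norm_eq_abs, abs_of_pos ht, mul_pow]
          rw [e1] at hsub
          rw [e2, e3] at habs'
          have e4 : ⟪u k, w⟫_ℝ - ⟪gradient f (y k), w⟫_ℝ = ‖w‖ ^ 2 := by
            rw [← inner_sub_left, ← hw, real_inner_self_eq_norm_sq]
          have habs2 := (abs_le.1 habs').2
          have key : t * ‖w‖ ^ 2 ≤ t * (0 + t * (B / 2 * ‖w‖ ^ 2)) := by
            nlinarith [hsub, habs2, e4]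
          have := le_of_mul_le_mul_left key ht
          linarith
        have : ‖w‖ = 0 := by nlinarith [norm_nonneg w, hww]
        have : w = 0 := norm_eq_zero.1 this
        rw [hw, sub_eq_zero] at this
        exact this
      set f0 : H → ℝ := fun x => f x - σ / 2 * ‖x‖ ^ 2 with hf0
      have hconv0 : ConvexOn ℝ Set.univ f0 := hsc
      have hg0 : ∀ x, HasGradientAt f0 (gradient f x - σ • x) x := fun x =>
        ((hdf x).hasGradientAt).sub' (hasGradientAt_half_sq σ x)
      have hg0e : ∀ x, gradient f0 x = gradient f x - σ • x := fun x => (hg0 x).gradient_eq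
      have hipe : ∀ a b : H, ⟪gradient f0 a, b - a⟫_ℝ
          = ⟪gradient f a, b - a⟫_ℝ - σ * ⟪a, b - a⟫_ℝ := by
        intro a b
        rw [hg0e, inner_sub_left, real_inner_smul_left]
      have hnsq : ∀ a b : H, ‖b‖ ^ 2 = ‖a‖ ^ 2 + 2 * ⟪a, b - a⟫_ℝ + ‖b - a‖ ^ 2 := by
        intro a b
        have := norm_add_sq' a (b - a)
        have e : a + (b - a) = b := by abel
        rwa [e] at this
      have hf0v : ∀ a : H, f0 a = f a - σ / 2 * ‖a‖ ^ 2 := fun a => rfl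
      have hdesc0 : ∀ a b : H, f0 b ≤ f0 a + ⟪gradient f0 a, b - a⟫_ℝ
          + (B - σ) / 2 * ‖b - a‖ ^ 2 := by
        intro a b
        have h1 := (abs_le.1 (habs a b)).2
        have h2 := hipe a b
        have h4 := hf0v a; have h5 := hf0v b
        rw [hnsq a b] at h5
        linarith
      have hlow0 : ∀ a b : H, f0 a + ⟪gradient f0 a, b - a⟫_ℝ
          - (B + σ) / 2 * ‖b - a‖ ^ 2 ≤ f0 b := by
        intro a b
        have h1 := (abs_le.1 (habs a b)).1
        have h2 := hipe a b
        have h4 := hf0v a; have h5 := hf0v b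
        rw [hnsq a b] at h5
        linarith
      have hgi0 := grad_ineq_of_convex (L := B + σ) (by linarith) hconv0 hlow0
      have hcoco := cocoercivity (B := B - σ) (by linarith) hgi0 hdesc0 (y j) (y i)
      -- rewrite everything in terms of the data
      have hv : ∀ k, gradient f0 (y k) = u k - σ • y k := by
        intro k; rw [hg0e, ← ui_eq]
      have hfv : ∀ k, f0 (y k) = F k - σ / 2 * ‖y k‖ ^ 2 := by
        intro k; rw [hf0v, (hint k).1]
      rw [hv, hv, hfv, hfv] at hcoco
      have hwe : u i - σ • y i - (u j - σ • y j) = u i - u j - σ • (y i - y j) := by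
        rw [smul_sub]; abel
      rw [hwe] at hcoco
      have hco : interpCoeff σ β = 1 / (2 * (B - σ)) := by
        rw [interpCoeff, if_neg hβtop]
      rw [hco]
      have hie : ⟪u j - σ • y j, y i - y j⟫_ℝ
          = ⟪u j, y i - y j⟫_ℝ - σ * ⟪y j, y i - y j⟫_ℝ := by
        rw [inner_sub_left, real_inner_smul_left]
      rw [hie, hnsq (y j) (y i)] at hcoco
      linarith
  · intro h
    by_cases hβtop : β = ⊤
    · rcases isEmpty_or_nonempty ι with hemp | hne
      · refine ⟨fun x => σ / 2 * ‖x‖ ^ 2, ⟨?_, fun hne' => absurd hβtop hne', fun _ => ?_⟩,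
          fun i => isEmptyElim i⟩
        · have he : (fun x : H => σ / 2 * ‖x‖ ^ 2 - σ / 2 * ‖x‖ ^ 2) = fun _ => (0:ℝ) := by
            funext x; ring
          rw [StronglyConvex, he]
          exact convexOn_const 0 convex_univ
        · exact Continuous.lowerSemicontinuous (by continuity)
      · have hco : interpCoeff σ β = 0 := by rw [interpCoeff, if_pos hβtop]
        have hyp' : ∀ i j, F j + ⟪u j, y i - y j⟫_ℝ + σ / 2 * ‖y i - y j‖ ^ 2 ≤ F i := by
          intro i j
          have := h i j
          rw [hco, zero_mul] at this
          linarith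
        obtain ⟨f, hc, hconv, hval, hsub⟩ := max_construction hσ y F u hyp'
        exact ⟨f, ⟨hconv, fun hne' => absurd hβtop hne', fun _ => hc.lowerSemicontinuous⟩,
          fun i => ⟨hval i, fun z => hsub i z⟩⟩
    · set B := β.toReal with hBdef
      have hBσ : σ < B := by
        have h1 := (ENNReal.toReal_lt_toReal (ENNReal.ofReal_ne_top) hβtop).mpr hβ
        rwa [ENNReal.toReal_ofReal hσ] at h1
      have hco : interpCoeff σ β = 1 / (2 * (B - σ)) := by
        rw [interpCoeff, if_neg hβtop]
      rcases isEmpty_or_nonempty ι with hemp | hne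
      · refine ⟨fun x => σ / 2 * ‖x‖ ^ 2, ⟨?_, fun _ => ⟨?_, ?_⟩, fun htop => absurd htop hβtop⟩,
          fun i => isEmptyElim i⟩
        · have he : (fun x : H => σ / 2 * ‖x‖ ^ 2 - σ / 2 * ‖x‖ ^ 2) = fun _ => (0:ℝ) := by
            funext x; ring
          rw [StronglyConvex, he]
          exact convexOn_const 0 convex_univ
        · exact fun x => (hasGradientAt_half_sq σ x).hasFDerivAt.differentiableAt
        · intro a b
          rw [(hasGradientAt_half_sq σ a).gradient_eq, (hasGradientAt_half_sq σ b).gradient_eq,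
            ← smul_sub, norm_smul, Real.norm_eq_abs, abs_of_nonneg hσ]
          exact mul_le_mul_of_nonneg_right (by linarith) (norm_nonneg _)
      · set F' : ι → ℝ := fun i => F i - σ / 2 * ‖y i‖ ^ 2 with hF'
        set v : ι → H := fun i => u i - σ • y i with hvdef
        have hL : (0:ℝ) < B - σ := by linarith
        have hyp' : ∀ i j, F' j + ⟪v j, y i - y j⟫_ℝ
            + 1 / (2 * (B - σ)) * ‖v i - v j‖ ^ 2 ≤ F' i := by
          intro i j
          have h0 := h i j
          rw [hco] at h0
          have hwe : v i - v j = u i - u j - σ • (y i - y j) := by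
            rw [hvdef]; simp only []; rw [smul_sub]; abel
          rw [hwe]
          have hie : ⟪v j, y i - y j⟫_ℝ
              = ⟪u j, y i - y j⟫_ℝ - σ * ⟪y j, y i - y j⟫_ℝ := by
            rw [hvdef]; simp only []; rw [inner_sub_left, real_inner_smul_left]
          rw [hie]
          have hF'i : F' i = F i - σ / 2 * ‖y i‖ ^ 2 := rfl
          have hF'j : F' j = F j - σ / 2 * ‖y j‖ ^ 2 := rfl
          have hnn : ‖y i‖ ^ 2 = ‖y j‖ ^ 2 + 2 * ⟪y j, y i - y j⟫_ℝ + ‖y i - y j‖ ^ 2 := by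
            have := norm_add_sq' (y j) (y i - y j)
            have e : y j + (y i - y j) = y i := by abel
            rwa [e] at this
          rw [hF'i, hF'j, hnn]
          linarith
        obtain ⟨f0, hconv0, hdiff0, hlip0, hval0, haff0⟩ :=
          smooth_construction hL y F' v hyp'
        refine ⟨fun x => f0 x + σ / 2 * ‖x‖ ^ 2,
          ⟨?_, fun _ => ⟨?_, ?_⟩, fun htop => absurd htop hβtop⟩, fun i => ⟨?_, ?_⟩⟩
        · have he : (fun x => (f0 x + σ / 2 * ‖x‖ ^ 2) - σ / 2 * ‖x‖ ^ 2) = f0 := by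
            funext x; ring
          rw [StronglyConvex, he]
          exact hconv0
        · exact fun x => (((hdiff0 x).hasGradientAt).add'
            (hasGradientAt_half_sq σ x)).hasFDerivAt.differentiableAt
        · intro a b
          have hga := (((hdiff0 a).hasGradientAt).add' (hasGradientAt_half_sq σ a)).gradient_eq
          have hgb := (((hdiff0 b).hasGradientAt).add' (hasGradientAt_half_sq σ b)).gradient_eq
          rw [hga, hgb]
          have he : gradient f0 a + σ • a - (gradient f0 b + σ • b)
              = (gradient f0 a - gradient f0 b) + σ • (a - b) := by
            rw [smul_sub]; abel
          rw [he]
          calc ‖(gradient f0 a - gradient f0 b) + σ • (a - b)‖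
              ≤ ‖gradient f0 a - gradient f0 b‖ + ‖σ • (a - b)‖ := norm_add_le _ _
            _ ≤ (B - σ) * ‖a - b‖ + σ * ‖a - b‖ := by
                apply add_le_add (hlip0 a b)
                rw [norm_smul, Real.norm_eq_abs, abs_of_nonneg hσ]
            _ = B * ‖a - b‖ := by ring
        · have := hval0 i
          have hF'i : F' i = F i - σ / 2 * ‖y i‖ ^ 2 := rfl
          rw [hF'i] at this
          simp only []
          linarith
        · intro z
          have h1 := haff0 i z
          have hvi : v i = u i - σ • y i := rfl
          have hF'i : F' i = F i - σ / 2 * ‖y i‖ ^ 2 := rfl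
          rw [hval0 i, hvi, hF'i] at h1
          have hie : ⟪u i - σ • y i, z - y i⟫_ℝ
              = ⟪u i, z - y i⟫_ℝ - σ * ⟪y i, z - y i⟫_ℝ := by
            rw [inner_sub_left, real_inner_smul_left]
          rw [hie] at h1
          have hnn : ‖z‖ ^ 2 = ‖y i‖ ^ 2 + 2 * ⟪y i, z - y i⟫_ℝ + ‖z - y i‖ ^ 2 := by
            have := norm_add_sq' (y i) (z - y i)
            have e : y i + (z - y i) = z := by abel
            rwa [e] at this
          have h2 : (0:ℝ) ≤ σ / 2 * ‖z - y i‖ ^ 2 := by positivity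
          have hval0i := hval0 i
          rw [hF'i] at hval0i
          show (f0 (y i) + σ / 2 * ‖y i‖ ^ 2) + (inner ℝ (u i) (z - y i) : ℝ)
              ≤ f0 z + σ / 2 * ‖z‖ ^ 2
          rw [hnn]
          linarith
  
end Single

/-- Componentwise interpolation theorem for the classes `F_{σ_l,β_l}(H)`,
`l = 1,…,m`. -/
theorem interpolation_componentwise
    {H : Type*} [NormedAddCommGroup H] [InnerProductSpace ℝ H] [CompleteSpace H]
    {ι : Type*} [Fintype ι] {m : ℕ} (hm : 1 ≤ m)
    (σ : Fin m → ℝ) (β : Fin m → ℝ≥0∞)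
    (hσβ : ∀ l, 0 ≤ σ l ∧ ENNReal.ofReal (σ l) < β l)
    (Y : ι → Fin m → H) (Fv : ι → Fin m → ℝ) (U : ι → Fin m → H) :
    (∃ f : Fin m → H → ℝ, (∀ l, MemFClass (σ l) (β l) (f l)) ∧
        ∀ i, ∀ l, f l (Y i l) = Fv i l ∧ IsSubgradientAt (f l) (U i l) (Y i l)) ↔
      ∀ l, ∀ i j, Fv j l + (inner ℝ (U j l) (Y i l - Y j l) : ℝ) +
          σ l / 2 * ‖Y i l - Y j l‖ ^ 2 +
          interpCoeff (σ l) (β l) * ‖U i l - U j l - σ l • (Y i l - Y j l)‖ ^ 2 ≤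
        Fv i l := by
  constructor
  · rintro ⟨f, hf, hint⟩ l
    exact (interp_single (hσβ l).1 (hσβ l).2 (fun i => Y i l) (fun i => Fv i l)
      (fun i => U i l)).1 ⟨f l, hf l, fun i => hint i l⟩
  · intro h
    have hex : ∀ l, ∃ g : H → ℝ, MemFClass (σ l) (β l) g ∧
        ∀ i, g (Y i l) = Fv i l ∧ IsSubgradientAt g (U i l) (Y i l) := fun l =>
      (interp_single (hσβ l).1 (hσβ l).2 (fun i => Y i l) (fun i => Fv i l)
        (fun i => U i l)).2 (h l)
    choose f hf1 hf2 using hex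
    exact ⟨f, hf1, fun i l => hf2 l i⟩
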